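/- Fix ε > 0 and real numbers a₀, a₁. Define h_t = (1+ε)/((ε+t)(1−t)) and a_t = a₀ + a₁(1−t) for t ∈ (0, 1), and define M(t) = a₀ · ((1−t)/(ε+t)) · ((1+ε)·ln(1/(1−t)) − t) + a₁ · ((1−t)/(ε+t)) · (t²/2 + εt). Then M is differentiable on (0, 1) with M′(t) = a_t − h_t · M(t) for all t ∈ (0, 1), and M(t) → 0 as t → 0⁺ and M(t) → 0 as t → 1⁻. -/

import Mathlib

open Real MeasureTheory Set Filter

/-- The closed-form mean `M` of the diffusion bridge with reversion rate
`h_t = (1+ε)/((ε+t)(1−t))` and source `a_t = a₀ + a₁(1−t)` solves the mean ODE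
`M′ = a_t − h_t·M` on `(0,1)` and satisfies `M(t) → 0` as `t → 0⁺` and as `t → 1⁻`. -/
theorem stmt_17 (ε a₀ a₁ : ℝ) (hε : 0 < ε)
    (h : ℝ → ℝ) (hh : ∀ t : ℝ, h t = (1 + ε) / ((ε + t) * (1 - t)))
    (a : ℝ → ℝ) (ha : ∀ t : ℝ, a t = a₀ + a₁ * (1 - t))
    (M : ℝ → ℝ)
    (hM : ∀ t : ℝ, M t =
      a₀ * ((1 - t) / (ε + t)) * ((1 + ε) * Real.log (1 / (1 - t)) - t)
        + a₁ * ((1 - t) / (ε + t)) * (t ^ 2 / 2 + ε * t)) :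
    (∀ t ∈ Ioo (0 : ℝ) 1, HasDerivAt M (a t - h t * M t) t) ∧
      Tendsto M (nhdsWithin 0 (Ioi 0)) (nhds 0) ∧
      Tendsto M (nhdsWithin 1 (Iio 1)) (nhds 0) := by
  have hMG : M = fun t => (a₀ * ((1 + ε) * (-((1 - t) * Real.log (1 - t))) - t * (1 - t))
      + a₁ * ((1 - t) * (t ^ 2 / 2 + ε * t))) / (ε + t) := by
    funext t
    rw [hM, one_div, Real.log_inv]
    ring
  have hnum : Continuous fun t : ℝ => a₀ * ((1 + ε) * (-((1 - t) * Real.log (1 - t))) - t * (1 - t))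
      + a₁ * ((1 - t) * (t ^ 2 / 2 + ε * t)) := by
    have hml : Continuous fun t : ℝ => (1 - t) * Real.log (1 - t) :=
      Real.continuous_mul_log.comp (continuous_const.sub continuous_id)
    fun_prop
  refine ⟨?_, ?_, ?_⟩
  · intro t ht
    have h1 : (1 : ℝ) - t ≠ 0 := by have := ht.2; intro hc; linarith
    have h2 : ε + t ≠ 0 := by have := ht.1; positivity
    have hf : HasDerivAt (fun t : ℝ => (1 - t) / (ε + t))
        (((-1) * (ε + t) - (1 - t) * 1) / (ε + t) ^ 2) t :=
      (((hasDerivAt_id t).const_sub 1)).div (((hasDerivAt_id t).const_add ε)) h2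
    have hlog : HasDerivAt (fun t : ℝ => Real.log (1 - t)) ((-1) / (1 - t)) t := by
      have := (((hasDerivAt_id t).const_sub 1)).log h1
      simpa using this
    have hg : HasDerivAt (fun t : ℝ => (1 + ε) * Real.log (1 / (1 - t)) - t)
        ((1 + ε) * (-((-1) / (1 - t))) - 1) t := by
      have heq : (fun t : ℝ => (1 + ε) * Real.log (1 / (1 - t)) - t)
          = fun t : ℝ => (1 + ε) * (-Real.log (1 - t)) - t := by
        funext s; rw [one_div, Real.log_inv]
      rw [heq]
      exact ((hlog.neg.const_mul (1 + ε))).sub (hasDerivAt_id t)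
    have hk : HasDerivAt (fun t : ℝ => t ^ 2 / 2 + ε * t) (t + ε) t := by
      have := (((hasDerivAt_pow 2 t)).div_const 2).add ((hasDerivAt_id t).const_mul ε)
      refine this.congr_deriv ?_
      norm_num
    have hbig := (((hf.const_mul a₀).mul hg).add ((hf.const_mul a₁).mul hk))
    have hMfun : M = fun t : ℝ => a₀ * ((1 - t) / (ε + t)) * ((1 + ε) * Real.log (1 / (1 - t)) - t)
        + a₁ * ((1 - t) / (ε + t)) * (t ^ 2 / 2 + ε * t) := funext hM
    rw [hMfun]
    refine hbig.congr_deriv ?_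
    symm
    simp only [ha, hh, one_div, Real.log_inv]
    field_simp
    ring
  · have hc : ContinuousAt M 0 := by
      rw [hMG]
      exact hnum.continuousAt.div (by fun_prop) (by simpa using hε.ne')
    have h0 : M 0 = 0 := by rw [hM]; simp
    have h2 := hc.tendsto.mono_left (nhdsWithin_le_nhds (s := Ioi (0:ℝ)))
    rwa [h0] at h2
  · have hc : ContinuousAt M 1 := by
      rw [hMG]
      exact hnum.continuousAt.div (by fun_prop) (by intro hc; linarith)
    have h1 : M 1 = 0 := by rw [hMG]; simp
    have h2 := hc.tendsto.mono_left (nhdsWithin_le_nhds (s := Iio (1:ℝ)))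
    rwa [h1] at h2
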